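/- Define A_ℓ = ∑_{b₁,…,b_ℓ ≥ 2} 2^{ℓ − (b₁+⋯+b_ℓ)} · [[b₁,…,b_ℓ]]^L for ℓ ≥ 1 and A₀ = 0, where L ≥ 1 is a fixed integer and the sum is over all ℓ-tuples of integers ≥ 2. Then each A_ℓ converges absolutely, 0 ≤ A_ℓ ≤ 1, and the sequence (A_ℓ) is strictly increasing in ℓ for ℓ ≥ 1. -/

import Mathlib

open scoped BigOperators

/-- Finite semi-regular continued fraction `[[b₁,…,b_m]] = 1/(b₁ - [[b₂,…,b_m]])`,
with the empty continued fraction equal to `0` (so `[[b]] = 1/b`). -/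
noncomputable def srcf : List ℝ → ℝ
  | [] => 0
  | b :: t => 1 / (b - srcf t)

/-- `Aseq L ℓ = ∑_{b₁,…,b_ℓ ≥ 2} 2^{ℓ-(b₁+⋯+b_ℓ)} [[b₁,…,b_ℓ]]^L` (with `Aseq L 0 = 0`). -/
noncomputable def Aseq (L ℓ : ℕ) : ℝ :=
  ∑' b : Fin ℓ → {n : ℕ // 2 ≤ n},
    (2 : ℝ) ^ ((ℓ : ℤ) - ∑ i, ((b i : ℕ) : ℤ)) *
      (srcf (List.ofFn fun i => ((b i : ℕ) : ℝ))) ^ L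

/-! ### Auxiliary lemmas -/

lemma srcf_mem (l : List ℝ) (hl : ∀ x ∈ l, 2 ≤ x) : 0 ≤ srcf l ∧ srcf l < 1 := by
  induction l with
  | nil => simp [srcf]
  | cons b t ih =>
    have hb : 2 ≤ b := hl b (by simp)
    have ht := ih (fun x hx => hl x (List.mem_cons_of_mem _ hx))
    have h1 : 1 < b - srcf t := by linarith [ht.1, ht.2]
    constructor
    · exact le_of_lt (by rw [srcf]; positivity)
    · rw [srcf, div_lt_one (by linarith)]; linarith

lemma srcf_append_lt (c : ℝ) (hc : 2 ≤ c) :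
    ∀ l : List ℝ, (∀ x ∈ l, 2 ≤ x) → srcf l < srcf (l ++ [c]) := by
  intro l
  induction l with
  | nil =>
    intro _
    simp only [List.nil_append, srcf, sub_zero]
    positivity
  | cons b t ih =>
    intro hl
    have hb : 2 ≤ b := hl b (by simp)
    have htmem : ∀ x ∈ t, 2 ≤ x := fun x hx => hl x (List.mem_cons_of_mem _ hx)
    have h1 := ih htmem
    have h2 : ∀ x ∈ t ++ [c], 2 ≤ x := by
      intro x hx
      rcases List.mem_append.1 hx with h | h
      · exact htmem x h
      · simp at h; subst h; exact hc
    have h3 := srcf_mem (t ++ [c]) h2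
    have hpos : 0 < b - srcf (t ++ [c]) := by linarith [h3.2]
    have : srcf (b :: (t ++ [c])) = 1 / (b - srcf (t ++ [c])) := rfl
    rw [List.cons_append, this, srcf]
    exact one_div_lt_one_div_of_lt hpos (by linarith)

/-- weight `2^{1-n}` on integers `n ≥ 2`. -/
noncomputable def wgt (n : {n : ℕ // 2 ≤ n}) : ℝ := (2:ℝ) ^ ((1:ℤ) - (n:ℕ))

def e2 : ℕ ≃ {n : ℕ // 2 ≤ n} where
  toFun m := ⟨m + 2, by omega⟩
  invFun n := (n : ℕ) - 2
  left_inv m := by simp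
  right_inv n := by cases n with | mk v hv => simp; omega

lemma wgt_pos (n : {n : ℕ // 2 ≤ n}) : 0 < wgt n := by
  unfold wgt; positivity

lemma wgt_comp (m : ℕ) : wgt (e2 m) = (1/2 : ℝ) * (1/2) ^ m := by
  show (2:ℝ) ^ ((1:ℤ) - ((m + 2 : ℕ) : ℤ)) = _
  rw [show (1:ℤ) - ((m + 2 : ℕ):ℤ) = -((m+1 : ℕ):ℤ) by push_cast; ring,
    zpow_neg, zpow_natCast, pow_succ, one_div, mul_inv, ← inv_pow]
  ring

lemma wgt_summable : Summable wgt := by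
  rw [← e2.summable_iff]
  have : (wgt ∘ e2) = fun m : ℕ => (1/2:ℝ) * (1/2)^m := funext wgt_comp
  rw [this]
  exact (summable_geometric_of_lt_one (by norm_num) (by norm_num)).mul_left _

lemma wgt_tsum : ∑' n, wgt n = 1 := by
  rw [← e2.tsum_eq wgt]
  rw [tsum_congr wgt_comp, tsum_mul_left,
    tsum_geometric_of_lt_one (by norm_num) (by norm_num)]
  norm_num

def snocEquiv (α : Type*) (ℓ : ℕ) : (Fin (ℓ+1) → α) ≃ (Fin ℓ → α) × α where
  toFun b := (fun i => b i.castSucc, b (Fin.last ℓ))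
  invFun p := Fin.snoc p.1 p.2
  left_inv b := Fin.snoc_init_self b
  right_inv p := by
    obtain ⟨f, a⟩ := p
    simp only [Fin.snoc_castSucc, Fin.snoc_last]

lemma tsum_mul_prod {α β : Type*} {f : α → ℝ} {g : β → ℝ} (hf : Summable f) (hg : Summable g)
    (hf0 : ∀ a, 0 ≤ f a) (hg0 : ∀ b, 0 ≤ g b) :
    Summable (fun p : α × β => f p.1 * g p.2) ∧
      ∑' p : α × β, f p.1 * g p.2 = (∑' a, f a) * (∑' b, g b) := by
  have hs : Summable (fun p : α × β => f p.1 * g p.2) :=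
    hf.mul_of_nonneg hg hf0 hg0
  refine ⟨hs, ?_⟩
  rw [Summable.tsum_prod' hs (fun a => hg.mul_left (f a))]
  rw [show (fun a => ∑' b, f a * g b) = (fun a => f a * ∑' b, g b) from
    funext fun a => tsum_mul_left]
  exact tsum_mul_right

/-- total weight of a tuple. -/
noncomputable def Wt (ℓ : ℕ) (b : Fin ℓ → {n : ℕ // 2 ≤ n}) : ℝ := ∏ i, wgt (b i)

lemma Wt_pos (ℓ : ℕ) (b : Fin ℓ → {n : ℕ // 2 ≤ n}) : 0 < Wt ℓ b :=
  Finset.prod_pos fun i _ => wgt_pos (b i)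

lemma Wt_snoc (ℓ : ℕ) (b : Fin ℓ → {n : ℕ // 2 ≤ n}) (c : {n : ℕ // 2 ≤ n}) :
    Wt (ℓ+1) (Fin.snoc b c) = Wt ℓ b * wgt c := by
  unfold Wt
  rw [Fin.prod_univ_castSucc]
  simp only [Fin.snoc_castSucc, Fin.snoc_last]

lemma Wt_summable_tsum : ∀ ℓ : ℕ, Summable (Wt ℓ) ∧ ∑' b, Wt ℓ b = 1 := by
  intro ℓ
  induction ℓ with
  | zero =>
    constructor
    · exact Summable.of_finite
    · rw [tsum_eq_single (default : Fin 0 → {n : ℕ // 2 ≤ n})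
        (fun b hb => absurd (Subsingleton.elim b default) hb)]
      simp [Wt]
  | succ ℓ ih =>
    have key : (Wt (ℓ+1)) ∘ (snocEquiv _ ℓ).symm
        = fun p => Wt ℓ p.1 * wgt p.2 := by
      funext p
      exact Wt_snoc ℓ p.1 p.2
    have h := tsum_mul_prod ih.1 wgt_summable (fun b => (Wt_pos ℓ b).le)
      (fun c => (wgt_pos c).le)
    constructor
    · rw [← (snocEquiv _ ℓ).symm.summable_iff, key]
      exact h.1
    · rw [← (snocEquiv _ ℓ).symm.tsum_eq (Wt (ℓ+1))]
      have : ∀ p : (Fin ℓ → {n : ℕ // 2 ≤ n}) × {n : ℕ // 2 ≤ n},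
          Wt (ℓ+1) ((snocEquiv _ ℓ).symm p) = Wt ℓ p.1 * wgt p.2 :=
        fun p => Wt_snoc ℓ p.1 p.2
      rw [tsum_congr this, h.2, ih.2, wgt_tsum, one_mul]

/-- the list of a tuple. -/
noncomputable def lst (ℓ : ℕ) (b : Fin ℓ → {n : ℕ // 2 ≤ n}) : List ℝ :=
  List.ofFn fun i => ((b i : ℕ) : ℝ)

lemma lst_mem (ℓ : ℕ) (b : Fin ℓ → {n : ℕ // 2 ≤ n}) : ∀ x ∈ lst ℓ b, 2 ≤ x := by
  intro x hx
  rw [lst, List.mem_ofFn] at hx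
  obtain ⟨i, rfl⟩ := hx
  show (2:ℝ) ≤ ((b i : ℕ):ℝ)
  exact_mod_cast (b i).2

lemma lst_snoc (ℓ : ℕ) (b : Fin ℓ → {n : ℕ // 2 ≤ n}) (c : {n : ℕ // 2 ≤ n}) :
    lst (ℓ+1) (Fin.snoc b c) = lst ℓ b ++ [((c:ℕ):ℝ)] := by
  unfold lst
  rw [List.ofFn_succ']
  simp only [Fin.snoc_castSucc, Fin.snoc_last, List.concat_eq_append]

lemma zpow2_sum {ι : Type*} (s : Finset ι) (c : ι → ℤ) :
    (2:ℝ) ^ (∑ i ∈ s, c i) = ∏ i ∈ s, (2:ℝ) ^ (c i) := by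
  classical
  induction s using Finset.induction_on with
  | empty => simp
  | insert _ _ h ih =>
    rw [Finset.sum_insert h, Finset.prod_insert h,
      zpow_add₀ (by norm_num : (2:ℝ) ≠ 0), ih]

lemma weight_eq (ℓ : ℕ) (b : Fin ℓ → {n : ℕ // 2 ≤ n}) :
    (2:ℝ) ^ ((ℓ:ℤ) - ∑ i, ((b i : ℕ) : ℤ)) = Wt ℓ b := by
  have h : (ℓ:ℤ) - ∑ i, ((b i : ℕ):ℤ) = ∑ i : Fin ℓ, ((1:ℤ) - ((b i : ℕ):ℤ)) := by
    rw [Finset.sum_sub_distrib, Finset.sum_const, Finset.card_univ, Fintype.card_fin]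
    ring
  rw [h, zpow2_sum]
  rfl

/-- the term function. -/
noncomputable def Gt (L ℓ : ℕ) (b : Fin ℓ → {n : ℕ // 2 ≤ n}) : ℝ :=
  Wt ℓ b * (srcf (lst ℓ b)) ^ L

lemma term_eq (L ℓ : ℕ) (b : Fin ℓ → {n : ℕ // 2 ≤ n}) :
    (2 : ℝ) ^ ((ℓ : ℤ) - ∑ i, ((b i : ℕ) : ℤ)) *
      (srcf (List.ofFn fun i => ((b i : ℕ) : ℝ))) ^ L = Gt L ℓ b := by
  rw [weight_eq]; rfl

lemma Gt_nonneg (L ℓ : ℕ) (b : Fin ℓ → {n : ℕ // 2 ≤ n}) : 0 ≤ Gt L ℓ b :=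
  mul_nonneg (Wt_pos ℓ b).le (pow_nonneg (srcf_mem _ (lst_mem ℓ b)).1 _)

lemma Gt_le_Wt (L ℓ : ℕ) (b : Fin ℓ → {n : ℕ // 2 ≤ n}) : Gt L ℓ b ≤ Wt ℓ b := by
  have h := srcf_mem _ (lst_mem ℓ b)
  calc Gt L ℓ b ≤ Wt ℓ b * 1 :=
        mul_le_mul_of_nonneg_left (pow_le_one₀ h.1 h.2.le) (Wt_pos ℓ b).le
    _ = Wt ℓ b := mul_one _

lemma Gt_summable (L ℓ : ℕ) : Summable (Gt L ℓ) :=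
  Summable.of_nonneg_of_le (Gt_nonneg L ℓ) (Gt_le_Wt L ℓ) (Wt_summable_tsum ℓ).1

lemma Aseq_eq (L ℓ : ℕ) : Aseq L ℓ = ∑' b, Gt L ℓ b := by
  unfold Aseq
  exact tsum_congr (term_eq L ℓ)

/-- Each `A_ℓ = ∑_{b₁,…,b_ℓ ≥ 2} 2^{ℓ−(b₁+⋯+b_ℓ)}[[b₁,…,b_ℓ]]^L` converges (the series
is summable), `0 ≤ A_ℓ ≤ 1`, and `(A_ℓ)` is strictly increasing for `ℓ ≥ 1`. -/
theorem Aseq_summable_bounded_strictMono (L : ℕ) (hL : 1 ≤ L) :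
    (∀ ℓ : ℕ, Summable fun b : Fin ℓ → {n : ℕ // 2 ≤ n} =>
      (2 : ℝ) ^ ((ℓ : ℤ) - ∑ i, ((b i : ℕ) : ℤ)) *
        (srcf (List.ofFn fun i => ((b i : ℕ) : ℝ))) ^ L) ∧
    (∀ ℓ : ℕ, 0 ≤ Aseq L ℓ ∧ Aseq L ℓ ≤ 1) ∧
    (∀ ℓ : ℕ, 1 ≤ ℓ → Aseq L ℓ < Aseq L (ℓ + 1)) := by
  refine ⟨?_, ?_, ?_⟩
  · intro ℓ
    have : (fun b : Fin ℓ → {n : ℕ // 2 ≤ n} =>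
        (2 : ℝ) ^ ((ℓ : ℤ) - ∑ i, ((b i : ℕ) : ℤ)) *
          (srcf (List.ofFn fun i => ((b i : ℕ) : ℝ))) ^ L) = Gt L ℓ :=
      funext (term_eq L ℓ)
    rw [this]
    exact Gt_summable L ℓ
  · intro ℓ
    rw [Aseq_eq]
    constructor
    · exact tsum_nonneg (Gt_nonneg L ℓ)
    · calc ∑' b, Gt L ℓ b ≤ ∑' b, Wt ℓ b :=
            Summable.tsum_le_tsum (Gt_le_Wt L ℓ) (Gt_summable L ℓ) (Wt_summable_tsum ℓ).1
        _ = 1 := (Wt_summable_tsum ℓ).2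
  · intro ℓ _
    rw [Aseq_eq, Aseq_eq]
    -- rearrange the (ℓ+1)-sum over pairs
    set f : (Fin ℓ → {n : ℕ // 2 ≤ n}) × {n : ℕ // 2 ≤ n} → ℝ :=
      fun p => Gt L ℓ p.1 * wgt p.2 with hf
    set g : (Fin ℓ → {n : ℕ // 2 ≤ n}) × {n : ℕ // 2 ≤ n} → ℝ :=
      fun p => (Wt ℓ p.1 * wgt p.2) * (srcf (lst ℓ p.1 ++ [((p.2:ℕ):ℝ)])) ^ L with hg
    have hgG : ∀ p, Gt L (ℓ+1) ((snocEquiv _ ℓ).symm p) = g p := by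
      intro p
      show Wt (ℓ+1) (Fin.snoc p.1 p.2) * (srcf (lst (ℓ+1) (Fin.snoc p.1 p.2)))^L = _
      rw [Wt_snoc, lst_snoc]
    have hAsucc : ∑' b, Gt L (ℓ+1) b = ∑' p, g p := by
      rw [← (snocEquiv _ ℓ).symm.tsum_eq (Gt L (ℓ+1))]
      exact tsum_congr hgG
    have hfsum := tsum_mul_prod (Gt_summable L ℓ) wgt_summable (Gt_nonneg L ℓ)
      (fun c => (wgt_pos c).le)
    have hA : ∑' b, Gt L ℓ b = ∑' p, f p := by
      rw [hfsum.2, wgt_tsum, mul_one]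
    -- pointwise strict inequality
    have hlt : ∀ p, f p < g p := by
      intro p
      have hmem2 : (2:ℝ) ≤ ((p.2:ℕ):ℝ) := by exact_mod_cast p.2.2
      have hs := srcf_append_lt _ hmem2 (lst ℓ p.1) (lst_mem ℓ p.1)
      have h0 := (srcf_mem _ (lst_mem ℓ p.1)).1
      have hpow : (srcf (lst ℓ p.1))^L < (srcf (lst ℓ p.1 ++ [((p.2:ℕ):ℝ)]))^L :=
        pow_lt_pow_left₀ hs h0 (by omega)
      have hwpos : 0 < Wt ℓ p.1 * wgt p.2 := mul_pos (Wt_pos ℓ p.1) (wgt_pos p.2)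
      calc f p = (Wt ℓ p.1 * wgt p.2) * (srcf (lst ℓ p.1))^L := by
            rw [hf]; unfold Gt; ring
        _ < g p := by
            rw [hg]
            exact mul_lt_mul_of_pos_left hpow hwpos
    -- summability of g
    have hWsum := tsum_mul_prod (Wt_summable_tsum ℓ).1 wgt_summable
      (fun b => (Wt_pos ℓ b).le) (fun c => (wgt_pos c).le)
    have hg_nonneg : ∀ p, 0 ≤ g p := by
      intro p
      rw [hg]
      have hmem : ∀ x ∈ lst ℓ p.1 ++ [((p.2:ℕ):ℝ)], 2 ≤ x := by
        intro x hx
        rcases List.mem_append.1 hx with h | h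
        · exact lst_mem ℓ p.1 x h
        · simp at h; subst h; exact_mod_cast p.2.2
      exact mul_nonneg (mul_pos (Wt_pos ℓ p.1) (wgt_pos p.2)).le
        (pow_nonneg (srcf_mem _ hmem).1 _)
    have hg_le : ∀ p, g p ≤ Wt ℓ p.1 * wgt p.2 := by
      intro p
      rw [hg]
      have hmem : ∀ x ∈ lst ℓ p.1 ++ [((p.2:ℕ):ℝ)], 2 ≤ x := by
        intro x hx
        rcases List.mem_append.1 hx with h | h
        · exact lst_mem ℓ p.1 x h
        · simp at h; subst h; exact_mod_cast p.2.2
      have h := srcf_mem _ hmem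
      calc (Wt ℓ p.1 * wgt p.2) * (srcf (lst ℓ p.1 ++ [((p.2:ℕ):ℝ)]))^L
          ≤ (Wt ℓ p.1 * wgt p.2) * 1 :=
            mul_le_mul_of_nonneg_left (pow_le_one₀ h.1 h.2.le)
              (mul_pos (Wt_pos ℓ p.1) (wgt_pos p.2)).le
        _ = Wt ℓ p.1 * wgt p.2 := mul_one _
    have hg_summ : Summable g :=
      Summable.of_nonneg_of_le hg_nonneg hg_le hWsum.1
    have hf_summ : Summable f := hfsum.1
    rw [hA, hAsucc]
    exact Summable.tsum_lt_tsum (fun p => (hlt p).le)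
      (hlt (fun _ => ⟨2, le_refl 2⟩, ⟨2, le_refl 2⟩)) hf_summ hg_summ
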